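/- Let U : ℝ^d → ℝ be continuously differentiable, m-strongly convex (m > 0) with minimizer x*, and L₁-Lipschitz gradient. Fix γ ∈ (0, 1/m̃) where m̃ = mL₁/(m+L₁), and let v ∈ ℝ^d with |v| ≤ C₀ be any vector. Then |x − x* − γ∇U(x) + (γ²/2)v|² ≤ (1 − m̃γ)|x − x*|² + γ³(C₀²/(4m̃) + γC₀²/4 + γ|∇U(x)||v|) whenever additionally −2γ/(m+L₁) + (5/4)γ² + γ³L₁²/(2m̃) + γ⁴L₁²/2 ≤ 0. -/

import Mathlib

open scoped RealInnerProductSpace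
open intervalIntegral

variable {E : Type*} [NormedAddCommGroup E] [InnerProductSpace ℝ E] [CompleteSpace E]

lemma grad_apply {U : E → ℝ} (x v : E) :
    ⟪gradient U x, v⟫ = fderiv ℝ U x v := by
  simp [gradient, InnerProductSpace.toDual_symm_apply]

lemma hasDerivAt_line {U : E → ℝ} (hU : ContDiff ℝ 1 U) (y w : E) (t : ℝ) :
    HasDerivAt (fun s : ℝ => U (y + s • w)) ⟪gradient U (y + t • w), w⟫ t := by
  have hd : HasFDerivAt U (fderiv ℝ U (y + t • w)) (y + t • w) :=
    (hU.differentiable one_ne_zero (y + t • w)).hasFDerivAt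
  have hl : HasDerivAt (fun s : ℝ => y + s • w) w t := by
    simpa using ((hasDerivAt_id t).smul_const w).const_add y
  have := hd.comp_hasDerivAt t hl
  rw [grad_apply]
  exact this

lemma cont_grad_line {U : E → ℝ} (hU : ContDiff ℝ 1 U) (y w : E) :
    Continuous (fun t : ℝ => (⟪gradient U (y + t • w), w⟫ : ℝ)) := by
  have h1 : Continuous (fun p : E => gradient U p) := by
    have := hU.continuous_fderiv one_ne_zero
    exact (InnerProductSpace.toDual ℝ E).symm.continuous.comp this
  have h2 : Continuous (fun t : ℝ => y + t • w) := by continuity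
  exact (h1.comp h2).inner continuous_const

lemma ftc_line {U : E → ℝ} (hU : ContDiff ℝ 1 U) (y w : E) :
    ∫ t in (0:ℝ)..1, (⟪gradient U (y + t • w), w⟫ : ℝ) = U (y + w) - U y := by
  have := integral_eq_sub_of_hasDerivAt (f := fun s : ℝ => U (y + s • w))
    (f' := fun t : ℝ => (⟪gradient U (y + t • w), w⟫ : ℝ))
    (fun t _ => hasDerivAt_line hU y w t)
    ((cont_grad_line hU y w).intervalIntegrable 0 1)
  simpa using this

lemma aux_integral (c e : ℝ) : ∫ t in (0:ℝ)..1, (c + e * t) = c + e / 2 := by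
  rw [intervalIntegral.integral_add (f := fun _ => c) (g := fun t => e * t) intervalIntegrable_const
    ((continuous_const.mul continuous_id').intervalIntegrable 0 1)]
  rw [intervalIntegral.integral_const_mul, integral_id]
  norm_num
  ring

lemma descent_lemma {U : E → ℝ} (hU : ContDiff ℝ 1 U) (L₁ : ℝ)
    (hLip : ∀ x y : E, ‖gradient U x - gradient U y‖ ≤ L₁ * ‖x - y‖) (y z : E) :
    U z ≤ U y + ⟪gradient U y, z - y⟫ + L₁ / 2 * ‖z - y‖ ^ 2 := by
  set w := z - y with hw
  have hbound : ∀ t ∈ Set.Icc (0:ℝ) 1,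
      (⟪gradient U (y + t • w), w⟫ : ℝ) ≤ ⟪gradient U y, w⟫ + L₁ * ‖w‖ ^ 2 * t := by
    intro t ht
    have h1 : (⟪gradient U (y + t • w) - gradient U y, w⟫ : ℝ)
        ≤ ‖gradient U (y + t • w) - gradient U y‖ * ‖w‖ := real_inner_le_norm _ _
    have h2 : ‖gradient U (y + t • w) - gradient U y‖ ≤ L₁ * ‖t • w‖ := by
      simpa using hLip (y + t • w) y
    have h3 : ‖t • w‖ = t * ‖w‖ := by
      rw [norm_smul, Real.norm_eq_abs, abs_of_nonneg ht.1]
    rw [h3] at h2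
    have h4 : (0:ℝ) ≤ ‖w‖ := norm_nonneg _
    have h6 := mul_le_mul_of_nonneg_right h2 h4
    have h5 := inner_sub_left (𝕜 := ℝ) (gradient U (y + t • w)) (gradient U y) w
    nlinarith [h1, h6, h5]
  have hint1 := (cont_grad_line hU y w).intervalIntegrable (μ := MeasureTheory.volume) (0:ℝ) 1
  have hint2 : IntervalIntegrable (fun t : ℝ => (⟪gradient U y, w⟫ : ℝ) + L₁ * ‖w‖ ^ 2 * t)
      MeasureTheory.volume 0 1 :=
    (continuous_const.add (continuous_const.mul continuous_id')).intervalIntegrable 0 1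
  have hmono := intervalIntegral.integral_mono_on (by norm_num) hint1 hint2 hbound
  rw [ftc_line hU y w, aux_integral] at hmono
  have hyw : y + w = z := by rw [hw]; abel
  rw [hyw] at hmono
  linarith

lemma convex_lower {U : E → ℝ} (hU : ContDiff ℝ 1 U) (m : ℝ)
    (hconv : ∀ x y : E, (⟪x - y, gradient U x - gradient U y⟫ : ℝ) ≥ m * ‖x - y‖ ^ 2) (y z : E) :
    U z ≥ U y + ⟪gradient U y, z - y⟫ + m / 2 * ‖z - y‖ ^ 2 := by
  set w := z - y with hw
  have hbound : ∀ t ∈ Set.Icc (0:ℝ) 1,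
      (⟪gradient U y, w⟫ : ℝ) + m * ‖w‖ ^ 2 * t ≤ ⟪gradient U (y + t • w), w⟫ := by
    intro t ht
    rcases eq_or_lt_of_le ht.1 with h0 | h0
    · simp [← h0]
    · have h1 := hconv (y + t • w) y
      have h2 : (y + t • w) - y = t • w := by abel
      rw [h2] at h1
      have h3 : ‖t • w‖ ^ 2 = t ^ 2 * ‖w‖ ^ 2 := by
        rw [norm_smul, Real.norm_eq_abs, abs_of_nonneg ht.1]; ring
      have h4 : (⟪t • w, gradient U (y + t • w) - gradient U y⟫ : ℝ)
          = t * ((⟪w, gradient U (y + t • w)⟫ : ℝ) - ⟪w, gradient U y⟫) := by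
        rw [real_inner_smul_left, inner_sub_right]
      rw [h3, h4] at h1
      have h5 : (⟪w, gradient U (y + t • w)⟫ : ℝ) - ⟪w, gradient U y⟫ ≥ m * (t * ‖w‖ ^ 2) := by
        nlinarith [h1, h0]
      have hc1 : (⟪gradient U (y + t • w), w⟫ : ℝ) = ⟪w, gradient U (y + t • w)⟫ :=
        real_inner_comm _ _
      have hc2 : (⟪gradient U y, w⟫ : ℝ) = ⟪w, gradient U y⟫ := real_inner_comm _ _
      rw [hc1, hc2]
      linarith
  have hint1 := (cont_grad_line hU y w).intervalIntegrable (μ := MeasureTheory.volume) (0:ℝ) 1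
  have hint2 : IntervalIntegrable (fun t : ℝ => (⟪gradient U y, w⟫ : ℝ) + m * ‖w‖ ^ 2 * t)
      MeasureTheory.volume 0 1 :=
    (continuous_const.add (continuous_const.mul continuous_id')).intervalIntegrable 0 1
  have hmono := intervalIntegral.integral_mono_on (by norm_num) hint2 hint1 hbound
  rw [ftc_line hU y w, aux_integral] at hmono
  have hyw : y + w = z := by rw [hw]; abel
  rw [hyw] at hmono
  linarith

lemma bh_half {F : E → ℝ} {G : E → E} {c : ℝ} (hc : 0 < c)
    (hA : ∀ x z : E, F x + ⟪G x, z - x⟫ ≤ F z)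
    (hB : ∀ y z : E, F z ≤ F y + ⟪G y, z - y⟫ + c / 2 * ‖z - y‖ ^ 2) (x y : E) :
    F x + ⟪G x, y - x⟫ + ‖G y - G x‖ ^ 2 / (2 * c) ≤ F y := by
  set z := y - (1/c) • (G y - G x) with hz
  have h1 := hA x z
  have h2 := hB y z
  have e1 : (⟪G x, z - x⟫ : ℝ) = ⟪G x, y - x⟫ - (1/c) * ⟪G x, G y - G x⟫ := by
    rw [hz]
    have : y - (1/c) • (G y - G x) - x = (y - x) - (1/c) • (G y - G x) := by abel
    rw [this, inner_sub_right, real_inner_smul_right]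
  have e2 : (⟪G y, z - y⟫ : ℝ) = -(1/c) * ⟪G y, G y - G x⟫ := by
    rw [hz]
    have : y - (1/c) • (G y - G x) - y = -((1/c) • (G y - G x)) := by abel
    rw [this, inner_neg_right, real_inner_smul_right]; ring
  have e3 : ‖z - y‖ ^ 2 = (1/c)^2 * ‖G y - G x‖ ^ 2 := by
    rw [hz]
    have : y - (1/c) • (G y - G x) - y = -((1/c) • (G y - G x)) := by abel
    rw [this, norm_neg, norm_smul, Real.norm_eq_abs, mul_pow, sq_abs]
  have e4 : (⟪G y, G y - G x⟫ : ℝ) - ⟪G x, G y - G x⟫ = ‖G y - G x‖ ^ 2 := by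
    rw [← inner_sub_left, real_inner_self_eq_norm_sq]
  rw [e1] at h1
  rw [e2, e3] at h2
  have e5 : (1/c) * (⟪G y, G y - G x⟫ : ℝ) - (1/c) * ⟪G x, G y - G x⟫
      = (1/c) * ‖G y - G x‖ ^ 2 := by rw [← e4]; ring
  have hfin : (1/c) * ‖G y - G x‖ ^ 2 - c/2 * ((1/c)^2 * ‖G y - G x‖ ^ 2)
      = ‖G y - G x‖ ^ 2 / (2*c) := by
    field_simp
    ring
  linarith [h1, h2, e5, hfin]

lemma bh_cocoercive {F : E → ℝ} {G : E → E} {c : ℝ} (hc : 0 < c)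
    (hA : ∀ x z : E, F x + ⟪G x, z - x⟫ ≤ F z)
    (hB : ∀ y z : E, F z ≤ F y + ⟪G y, z - y⟫ + c / 2 * ‖z - y‖ ^ 2) (x y : E) :
    (⟪x - y, G x - G y⟫ : ℝ) ≥ ‖G x - G y‖ ^ 2 / c := by
  have h1 := bh_half hc hA hB x y
  have h2 := bh_half hc hA hB y x
  have e2 : ‖G y - G x‖ = ‖G x - G y‖ := norm_sub_rev _ _
  rw [e2] at h1
  have ehalf : ‖G x - G y‖^2 / (2*c) + ‖G x - G y‖^2 / (2*c) = ‖G x - G y‖^2 / c := by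
    ring
  have egoal : (⟪x - y, G x - G y⟫ : ℝ) = -((⟪G x, y - x⟫ : ℝ) + ⟪G y, x - y⟫) := by
    simp only [inner_sub_left, inner_sub_right]
    rw [real_inner_comm x (G x), real_inner_comm x (G y),
      real_inner_comm y (G x), real_inner_comm y (G y)]
    ring
  rw [egoal]
  linarith [h1, h2, ehalf]

lemma cocoercive {U : E → ℝ} (hU : ContDiff ℝ 1 U) {m L₁ : ℝ} (hm : 0 < m) (hL₁ : 0 < L₁)
    (hconv : ∀ x y : E, (⟪x - y, gradient U x - gradient U y⟫ : ℝ) ≥ m * ‖x - y‖ ^ 2)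
    (hLip : ∀ x y : E, ‖gradient U x - gradient U y‖ ≤ L₁ * ‖x - y‖) (x y : E) :
    (m + L₁) * ⟪x - y, gradient U x - gradient U y⟫
      ≥ ‖gradient U x - gradient U y‖ ^ 2 + m * L₁ * ‖x - y‖ ^ 2 := by
  rcases le_or_gt L₁ m with hml | hml
  · have h1 := hconv x y
    have h2 := hLip x y
    have h3 : ‖gradient U x - gradient U y‖ ^ 2 ≤ L₁ ^ 2 * ‖x - y‖ ^ 2 := by
      nlinarith [norm_nonneg (gradient U x - gradient U y), norm_nonneg (x - y)]
    nlinarith [h1, h3, sq_nonneg ‖x - y‖, mul_nonneg (mul_nonneg (sub_nonneg.2 hml)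
      (by positivity : (0:ℝ) ≤ m + L₁)) (sq_nonneg ‖x - y‖)]
  · set F : E → ℝ := fun z => U z - m / 2 * ‖z‖ ^ 2 with hF
    set G : E → E := fun z => gradient U z - m • z with hG
    have hc : (0:ℝ) < L₁ - m := by linarith
    have key : ∀ a b : E, (⟪G a, b - a⟫ : ℝ)
        = ⟪gradient U a, b - a⟫ - m * ⟪a, b⟫ + m * ‖a‖ ^ 2 := by
      intro a b
      rw [hG]
      simp only [inner_sub_left, real_inner_smul_left, inner_sub_right]
      rw [real_inner_self_eq_norm_sq]
      ring
    have keyn : ∀ a b : E, ‖b - a‖ ^ 2 = ‖b‖ ^ 2 - 2 * ⟪a, b⟫ + ‖a‖ ^ 2 := by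
      intro a b
      rw [norm_sub_sq_real, real_inner_comm]
    have hA : ∀ a b : E, F a + ⟪G a, b - a⟫ ≤ F b := by
      intro a b
      have h := convex_lower hU m hconv a b
      rw [keyn a b] at h
      rw [hF]
      simp only
      rw [key a b]
      linarith
    have hB : ∀ a b : E, F b ≤ F a + ⟪G a, b - a⟫ + (L₁ - m) / 2 * ‖b - a‖ ^ 2 := by
      intro a b
      have h := descent_lemma hU L₁ hLip a b
      have hn := keyn a b
      rw [hF]
      simp only
      rw [key a b]
      nlinarith [h, hn]
    have hbh := bh_cocoercive hc hA hB x y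
    have hGxy : G x - G y = (gradient U x - gradient U y) - m • (x - y) := by
      rw [hG]
      simp only [smul_sub]
      abel
    rw [hGxy] at hbh
    set Δ := x - y
    set Δg := gradient U x - gradient U y
    have e1 : (⟪Δ, Δg - m • Δ⟫ : ℝ) = ⟪Δ, Δg⟫ - m * ‖Δ‖ ^ 2 := by
      rw [inner_sub_right, real_inner_smul_right, real_inner_self_eq_norm_sq]
    have e2 : ‖Δg - m • Δ‖ ^ 2 = ‖Δg‖ ^ 2 - 2 * m * ⟪Δg, Δ⟫ + m ^ 2 * ‖Δ‖ ^ 2 := by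
      rw [norm_sub_sq_real, real_inner_smul_right, norm_smul, Real.norm_eq_abs,
        abs_of_nonneg hm.le, mul_pow]
      ring
    rw [e1, e2] at hbh
    have e3 : (⟪Δg, Δ⟫ : ℝ) = ⟪Δ, Δg⟫ := real_inner_comm _ _
    rw [e3] at hbh
    have hbh2 := (div_le_iff₀ hc).mp hbh
    nlinarith [hbh2]

lemma grad_min_zero {U : E → ℝ} {xstar : E} (hmin : ∀ y, U xstar ≤ U y) :
    gradient U xstar = 0 := by
  have h : IsLocalMin U xstar := Filter.Eventually.of_forall hmin
  simp [gradient, h.fderiv_eq_zero]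


set_option maxHeartbeats 1000000 in
/-- One-step contraction estimate for the drift of the higher-order scheme. -/
theorem one_step_contraction {d : ℕ} (U : EuclideanSpace ℝ (Fin d) → ℝ)
    (hU : ContDiff ℝ 1 U) (m L₁ : ℝ) (hm : 0 < m) (hL₁ : 0 < L₁)
    (hconv : ∀ x y : EuclideanSpace ℝ (Fin d),
      (inner ℝ (x - y) (gradient U x - gradient U y) : ℝ) ≥ m * ‖x - y‖^2)
    (hLip : ∀ x y : EuclideanSpace ℝ (Fin d),
      ‖gradient U x - gradient U y‖ ≤ L₁ * ‖x - y‖)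
    (xstar : EuclideanSpace ℝ (Fin d)) (hmin : ∀ y, U xstar ≤ U y)
    (mt : ℝ) (hmt : mt = m * L₁ / (m + L₁))
    (γ : ℝ) (hγ : γ ∈ Set.Ioo 0 (1/mt))
    (C₀ : ℝ) (v : EuclideanSpace ℝ (Fin d)) (hv : ‖v‖ ≤ C₀)
    (hside : -2*γ/(m + L₁) + (5/4)*γ^2 + γ^3*L₁^2/(2*mt) + γ^4*L₁^2/2 ≤ 0)
    (x : EuclideanSpace ℝ (Fin d)) :
    ‖x - xstar - γ • gradient U x + (γ^2/2) • v‖^2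
      ≤ (1 - mt*γ) * ‖x - xstar‖^2
        + γ^3 * (C₀^2/(4*mt) + γ*C₀^2/4 + γ*‖gradient U x‖*‖v‖) := by 
  obtain ⟨hγ0, hγ1⟩ := hγ
  have hmL : (0:ℝ) < m + L₁ := by linarith
  have hmt0 : 0 < mt := by rw [hmt]; positivity
  have hgstar : gradient U xstar = 0 := grad_min_zero hmin
  have hco : (m + L₁) * ⟪x - xstar, gradient U x⟫
      ≥ ‖gradient U x‖ ^ 2 + m * L₁ * ‖x - xstar‖ ^ 2 := by
    have h := cocoercive hU hm hL₁ hconv hLip x xstar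
    rw [hgstar, sub_zero] at h
    exact h
  set g := gradient U x with hg
  set w := x - xstar - γ • g with hww
  set A := ‖x - xstar‖ with hA
  set Gn := ‖g‖ with hGn
  set V := ‖v‖ with hV
  set s : ℝ := ⟪x - xstar, g⟫ with hs0
  set W := ‖w‖ with hW
  have hV0 : 0 ≤ V := norm_nonneg _
  have hC0 : 0 ≤ C₀ := le_trans hV0 hv
  have hA0 : 0 ≤ A := norm_nonneg _
  have hW0 : 0 ≤ W := norm_nonneg _
  have hGn0 : 0 ≤ Gn := norm_nonneg _
  -- expansion of the squared norm
  have e1 : ‖w + (γ^2/2) • v‖^2 = W^2 + γ^2 * ⟪w, v⟫ + γ^4/4 * V^2 := by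
    rw [norm_add_sq_real, real_inner_smul_right, norm_smul, Real.norm_eq_abs,
      abs_of_nonneg (by positivity : (0:ℝ) ≤ γ^2/2), mul_pow]
    ring
  have e2 : W^2 = A^2 - 2*γ*s + γ^2*Gn^2 := by
    rw [hW, hww, norm_sub_sq_real, real_inner_smul_right, norm_smul, Real.norm_eq_abs,
      abs_of_nonneg hγ0.le, mul_pow]
    ring
  -- divided coercivity
  set B := Gn^2/(m+L₁) with hBdef
  have hB0 : 0 ≤ B := by positivity
  have hB : B*(m+L₁) = Gn^2 := div_mul_cancel₀ _ hmL.ne'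
  have hs : mt*A^2 + B ≤ s := by
    have h1 : (Gn^2 + m*L₁*A^2)/(m+L₁) ≤ s := (div_le_iff₀ hmL).mpr (by linarith [hco])
    have h2 : (Gn^2 + m*L₁*A^2)/(m+L₁) = Gn^2/(m+L₁) + mt*A^2 := by
      rw [hmt]; field_simp
    rw [hBdef]
    linarith
  -- side condition consequence
  have hγside : γ^2 ≤ 2*γ/(m+L₁) := by
    have p1 : 0 ≤ γ^3*L₁^2/(2*mt) := by positivity
    have p2 : 0 ≤ γ^4*L₁^2/2 := by positivity
    have p3 : 0 ≤ γ^2 := sq_nonneg γ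
    have e : -2*γ/(m+L₁) = -(2*γ/(m+L₁)) := by ring
    rw [e] at hside
    linarith
  have hγside' : γ^2*(m+L₁) ≤ 2*γ := (le_div_iff₀ hmL).mp hγside
  have hkey : γ^2*Gn^2 ≤ 2*γ*B := by
    have h := mul_le_mul_of_nonneg_right hγside' hB0
    calc γ^2*Gn^2 = γ^2*(m+L₁)*B := by rw [← hB]; ring
      _ ≤ 2*γ*B := h
  -- contraction of ‖w‖
  have hW2 : W^2 ≤ (1 - 2*mt*γ)*A^2 := by
    have p1 : γ*(mt*A^2 + B) ≤ γ*s := mul_le_mul_of_nonneg_left hs hγ0.le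
    linarith [e2, p1, hkey]
  have h1mt : (1 + mt*γ)*W^2 ≤ (1 - mt*γ)*A^2 := by
    have hpos : (0:ℝ) ≤ 1 + mt*γ := by positivity
    have h := mul_le_mul_of_nonneg_left hW2 hpos
    nlinarith [h, sq_nonneg (mt*γ*A)]
  -- Young's inequality
  have young : γ^2*(W*V) ≤ mt*γ*W^2 + γ^3*V^2/(4*mt) := by
    have hy2 : γ*(2*mt*W - γ*V)^2/(4*mt) = mt*γ*W^2 + γ^3*V^2/(4*mt) - γ^2*(W*V) := by
      field_simp; ring
    have hy3 : (0:ℝ) ≤ γ*(2*mt*W - γ*V)^2/(4*mt) := by positivity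
    linarith [hy2, hy3]
  -- Cauchy–Schwarz
  have hwv : γ^2*⟪w, v⟫ ≤ γ^2*(W*V) :=
    mul_le_mul_of_nonneg_left (real_inner_le_norm w v) (by positivity)
  -- bounds on V
  have hV2 : V^2 ≤ C₀^2 := by nlinarith [hv, hV0]
  have hdiv : γ^3*V^2/(4*mt) ≤ γ^3*C₀^2/(4*mt) := by gcongr
  have hq : γ^4/4*V^2 ≤ γ^4/4*C₀^2 := mul_le_mul_of_nonneg_left hV2 (by positivity)
  have hp5 : (0:ℝ) ≤ γ^4*Gn*V := by positivity
  -- conclusion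
  have hgoal : ‖w + (γ^2/2) • v‖^2
      ≤ (1 - mt*γ)*A^2 + γ^3*(C₀^2/(4*mt) + γ*C₀^2/4 + γ*Gn*V) := by
    have hrhs : γ^3*(C₀^2/(4*mt) + γ*C₀^2/4 + γ*Gn*V)
        = γ^3*C₀^2/(4*mt) + γ^4/4*C₀^2 + γ^4*Gn*V := by
      field_simp
    rw [e1, hrhs]
    linarith [hwv, young, h1mt, hdiv, hq, hp5]
  have hfin : x - xstar - γ • g + (γ^2/2) • v = w + (γ^2/2) • v := by rw [hww]
  rw [hfin]
  exact hgoal
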